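/- There exist two disjoint recursively enumerable subsets A and B of ℕ that are recursively inseparable: there is no recursive (computable) set C with A ⊆ C and B ∩ C = ∅. -/

import Mathlib

open Nat.Partrec (Code)
open Nat.Partrec.Code

/-- `A ⊆ ℕ` is recursively enumerable: it is the domain of a partial
computable function. -/
def REset (A : Set ℕ) : Prop :=
  ∃ f : ℕ →. Unit, Partrec f ∧ ∀ n : ℕ, n ∈ A ↔ (f n).Dom

lemma REset_diag (k : ℕ) : REset {n : ℕ | k ∈ eval (Denumerable.ofNat Code n) n} := by
  refine ⟨fun n => (eval (Denumerable.ofNat Code n) n).bind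
      (fun m => (cond (decide (m = k)) (some ()) none : Option Unit)), ?_, ?_⟩
  · exact (eval_part.comp ((Computable.ofNat _).comp Computable.id) Computable.id).bind
      (Computable.ofOption (Computable.cond
        ((Primrec.eq.comp Primrec.snd (Primrec.const k)).decide.to_comp)
        (Computable.const (some ())) (Computable.const none))).to₂
  · intro n
    simp only [Set.mem_setOf_eq, Part.bind_dom]
    constructor
    · intro h
      have hd : (eval (Denumerable.ofNat Code n) n).Dom := Part.dom_iff_mem.2 ⟨k, h⟩
      refine ⟨hd, ?_⟩
      have : (eval (Denumerable.ofNat Code n) n).get hd = k := Part.get_eq_of_mem h hd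
      simp [this]
    · rintro ⟨h, h2⟩
      by_cases hk : (eval (Denumerable.ofNat Code n) n).get h = k
      · rw [← hk]; exact Part.get_mem h
      · simp [hk] at h2

/-- There exist two disjoint recursively enumerable subsets of `ℕ` that are
**recursively inseparable**: no recursive (computable) set `C` satisfies
`A ⊆ C` and `B ∩ C = ∅`. -/
theorem exists_recursively_inseparable_re_sets :
    ∃ A B : Set ℕ, REset A ∧ REset B ∧ Disjoint A B ∧
      ¬ ∃ C : Set ℕ, ComputablePred (· ∈ C) ∧ A ⊆ C ∧ B ∩ C = ∅ := by
  refine ⟨{n : ℕ | 0 ∈ eval (Denumerable.ofNat Code n) n},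
    {n : ℕ | 1 ∈ eval (Denumerable.ofNat Code n) n},
    REset_diag 0, REset_diag 1, ?_, ?_⟩
  · rw [Set.disjoint_left]
    intro n h0 h1
    exact absurd (Part.mem_unique h0 h1) (by norm_num)
  · rintro ⟨C, hC, hAC, hBC⟩
    obtain ⟨D, hD⟩ := hC
    set g : ℕ → ℕ := fun n => cond (decide (n ∈ C)) 1 0 with hg
    have hgc : Computable g := Computable.cond hD (.const 1) (.const 0)
    have hgp : Nat.Partrec (fun n => Part.some (g n)) := Partrec.nat_iff.1 hgc.partrec
    obtain ⟨c, hc⟩ := exists_code.1 hgp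
    set e := Encodable.encode c with he
    have hce : (Denumerable.ofNat Code e) = c := Denumerable.ofNat_encode c
    have heval : eval (Denumerable.ofNat Code e) e = Part.some (g e) := by
      rw [hce, hc]
    by_cases hmem : e ∈ C
    · have : e ∈ ({n : ℕ | 1 ∈ eval (Denumerable.ofNat Code n) n} ∩ C) := by
        refine ⟨?_, hmem⟩
        simp [Set.mem_setOf_eq, heval, hg, hmem]
      rw [hBC] at this
      exact this
    · have : e ∈ {n : ℕ | 0 ∈ eval (Denumerable.ofNat Code n) n} := by
        simp [Set.mem_setOf_eq, heval, hg, hmem]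
      exact hmem (hAC this)
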